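/- Let G = (V,E) be a finite simple graph without isolated vertices and define the independent set game Γ_G on player set E by γ(F) = α(G[V⟨F⟩]) for F ⊆ E. Then Γ_G is convex (i.e., γ(S) + γ(T) ≤ γ(S ∩ T) + γ(S ∪ T) for all S, T ⊆ E) if and only if every non-pendant edge of G is incident to a pendant edge of G. -/

import Mathlib

/-- `closedVerts G F` is V⟨F⟩: the set of vertices of `G` all of whose incident
edges belong to `F`. -/
def closedVerts {V : Type*} (G : SimpleGraph V) (F : Set (Sym2 V)) : Set V :=
  {v | ∀ e ∈ G.edgeSet, v ∈ e → e ∈ F}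

/-- `s` is an independent set of the induced subgraph `G[A]`. -/
def IsIndepOn {V : Type*} (G : SimpleGraph V) (A : Set V) (s : Finset V) : Prop :=
  ↑s ⊆ A ∧ ∀ u ∈ s, ∀ v ∈ s, ¬ G.Adj u v

/-- `gamma G F = α(G[V⟨F⟩])`, the maximum size of an independent set of the
subgraph of `G` induced on `closedVerts G F`. -/
noncomputable def gamma {V : Type*} [Fintype V] (G : SimpleGraph V) (F : Set (Sym2 V)) : ℕ :=
  sSup {n | ∃ s : Finset V, IsIndepOn G (closedVerts G F) s ∧ s.card = n}



set_option linter.unusedSectionVars false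
set_option maxHeartbeats 1000000

section aux
variable {V : Type*} [Fintype V] {G : SimpleGraph V}

lemma le_gamma {F : Set (Sym2 V)} {s : Finset V}
    (h : IsIndepOn G (closedVerts G F) s) : s.card ≤ gamma G F := by
  apply le_csSup
  · exact ⟨Fintype.card V, by rintro n ⟨t, _, rfl⟩; exact t.card_le_univ⟩
  · exact ⟨s, h, rfl⟩

lemma gamma_le {F : Set (Sym2 V)} {n : ℕ}
    (h : ∀ s : Finset V, IsIndepOn G (closedVerts G F) s → s.card ≤ n) :
    gamma G F ≤ n := by
  refine csSup_le ⟨0, ?_⟩ ?_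
  · exact ⟨∅, ⟨by simp, by simp [IsIndepOn]⟩, by simp⟩
  · rintro m ⟨t, ht, rfl⟩; exact h t ht

lemma uniq_nb [DecidableRel G.Adj] {p a b : V} (hp : G.degree p = 1)
    (ha : G.Adj p a) (hb : G.Adj p b) : a = b := by
  have := Finset.card_le_one.mp (le_of_eq hp)
  exact this a (by simpa [SimpleGraph.mem_neighborFinset] using ha) b
    (by simpa [SimpleGraph.mem_neighborFinset] using hb)

lemma edge_eq {e : Sym2 V} {p : V} (he : e ∈ G.edgeSet) (hp : p ∈ e) :
    ∃ w, G.Adj p w ∧ e = s(p, w) := by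
  induction e using Sym2.inductionOn with
  | hf a b =>
    rw [SimpleGraph.mem_edgeSet] at he
    rcases Sym2.mem_iff.mp hp with rfl | rfl
    · exact ⟨b, he, rfl⟩
    · exact ⟨a, he.symm, Sym2.eq_swap⟩

lemma suff [DecidableRel G.Adj]
    (hcond : ∀ e ∈ G.edgeSet, (¬ ∃ v ∈ e, G.degree v = 1) →
        ∃ f ∈ G.edgeSet, (∃ v ∈ f, G.degree v = 1) ∧ ∃ u : V, u ∈ e ∧ u ∈ f)
    (S T : Set (Sym2 V)) :
    gamma G S + gamma G T ≤ gamma G (S ∩ T) + gamma G (S ∪ T) := by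
  classical
  set ix : V → ℕ := fun v => ((Fintype.equivFin V) v : ℕ) with hix
  have ixinj : Function.Injective ix := fun a b h =>
    (Fintype.equivFin V).injective (Fin.ext h)
  set Qs : Set V :=
    {v | ∃ u, G.Adj v u ∧ G.degree u = 1 ∧ (2 ≤ G.degree v ∨ ix u < ix v)} with hQs
  have Qs_def : ∀ v : V, v ∈ Qs ↔
      ∃ u, G.Adj v u ∧ G.degree u = 1 ∧ (2 ≤ G.degree v ∨ ix u < ix v) :=
    fun v => Iff.rfl
  have degpos : ∀ {a b : V}, G.Adj a b → 1 ≤ G.degree a := by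
    intro a b hab
    exact (G.degree_pos_iff_exists_adj a).mpr ⟨b, hab⟩
  -- Qs is a vertex cover
  have hcover : ∀ a b : V, G.Adj a b → a ∈ Qs ∨ b ∈ Qs := by
    have base : ∀ a b : V, G.Adj a b → G.degree b = 1 → a ∈ Qs ∨ b ∈ Qs := by
      intro a b hab hb1
      by_cases ha2 : 2 ≤ G.degree a
      · exact Or.inl ⟨b, hab, hb1, Or.inl ha2⟩
      · have ha1 : G.degree a = 1 := by have := degpos hab; omega
        have hne : ix a ≠ ix b := fun h => hab.ne (ixinj h)
        rcases lt_or_gt_of_ne hne with h | h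
        · exact Or.inr ⟨a, hab.symm, ha1, Or.inr h⟩
        · exact Or.inl ⟨b, hab, hb1, Or.inr h⟩
    intro a b hab
    by_cases hb1 : G.degree b = 1
    · exact base a b hab hb1
    by_cases ha1 : G.degree a = 1
    · exact (base b a hab.symm ha1).symm
    have ha2 : 2 ≤ G.degree a := by have := degpos hab; omega
    have hb2 : 2 ≤ G.degree b := by have := degpos hab.symm; omega
    have he : s(a, b) ∈ G.edgeSet := hab
    obtain ⟨f, hf, ⟨p, hpf, hp1⟩, u, hue, huf⟩ := hcond _ he (by
      rintro ⟨v, hv, hd⟩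
      rcases Sym2.mem_iff.mp hv with rfl | rfl <;> omega)
    obtain ⟨w, hadjw, rfl⟩ := edge_eq hf huf
    have hpu : p ≠ u := by
      rintro rfl
      rcases Sym2.mem_iff.mp hue with rfl | rfl <;> omega
    have hadjp : G.Adj u p := by
      rcases Sym2.mem_iff.mp hpf with h | h
      · exact absurd h hpu
      · rw [← h] at hadjw; exact hadjw
    have hu2 : 2 ≤ G.degree u := by
      rcases Sym2.mem_iff.mp hue with rfl | rfl
      · exact ha2
      · exact hb2
    have huQ : u ∈ Qs := ⟨p, hadjp, hp1, Or.inl hu2⟩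
    rcases Sym2.mem_iff.mp hue with rfl | rfl
    · exact Or.inl huQ
    · exact Or.inr huQ
  -- the choice function q ↦ pendant neighbor of q
  set g : V → V := fun v => if h : v ∈ Qs then ((Qs_def v).mp h).choose else v with hg
  have hg1 : ∀ v ∈ Qs, G.Adj v (g v) ∧ G.degree (g v) = 1 ∧
      (2 ≤ G.degree v ∨ ix (g v) < ix v) := by
    intro v hv
    have hgv : g v = ((Qs_def v).mp hv).choose := dif_pos hv
    rw [hgv]
    exact ((Qs_def v).mp hv).choose_spec
  have hg0 : ∀ v ∉ Qs, g v = v := by intro v hv; simp only [hg, dif_neg hv]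
  have hg2 : ∀ v ∈ Qs, g v ∉ Qs := by
    intro v hv hgv
    obtain ⟨hadj, hdeg, hor⟩ := hg1 v hv
    obtain ⟨u', hadj', hdeg', hor'⟩ := (Qs_def (g v)).mp hgv
    have hu' : u' = v := uniq_nb hdeg hadj' hadj.symm
    subst hu'
    rcases hor' with h | h
    · omega
    · rcases hor with h2 | h2
      · omega
      · omega
  have hg3 : ∀ v ∈ Qs, ∀ w ∈ Qs, g v = g w → v = w := by
    intro v hv w hw hvw
    have h1 := (hg1 v hv).1
    have h2 := (hg1 w hw).1
    rw [hvw] at h1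
    exact uniq_nb (hg1 w hw).2.1 h1.symm h2.symm
  -- key formula
  have key : ∀ F : Set (Sym2 V), gamma G F = ((closedVerts G F) \ Qs).ncard := by
    intro F
    have hgc : ∀ v ∈ Qs, v ∈ closedVerts G F → g v ∈ closedVerts G F := by
      intro v hv hvc e he hpe
      obtain ⟨hadj, hdeg, -⟩ := hg1 v hv
      obtain ⟨w, hadjw, rfl⟩ := edge_eq he hpe
      have : w = v := uniq_nb hdeg hadjw hadj.symm
      subst this
      exact hvc _ he (Sym2.mem_mk_right _ _)
    apply le_antisymm
    · apply gamma_le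
      intro s hs
      rw [Set.ncard_eq_toFinset_card']
      apply Finset.card_le_card_of_injOn g
      · intro a ha
        rw [Finset.mem_coe, Set.mem_toFinset]
        by_cases haQ : a ∈ Qs
        · exact ⟨hgc a haQ (hs.1 ha), hg2 a haQ⟩
        · rw [hg0 a haQ]; exact ⟨hs.1 ha, haQ⟩
      · intro a ha b hb hab
        by_cases haQ : a ∈ Qs <;> by_cases hbQ : b ∈ Qs
        · exact hg3 a haQ b hbQ hab
        · exfalso
          have h1 := (hg1 a haQ).1
          rw [hg0 b hbQ] at hab
          rw [hab] at h1
          exact hs.2 a (Finset.mem_coe.mp ha) b (Finset.mem_coe.mp hb) h1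
        · exfalso
          have h1 := (hg1 b hbQ).1
          rw [hg0 a haQ] at hab
          rw [← hab] at h1
          exact hs.2 b (Finset.mem_coe.mp hb) a (Finset.mem_coe.mp ha) h1
        · rw [hg0 a haQ, hg0 b hbQ] at hab; exact hab
    · have : IsIndepOn G (closedVerts G F) ((closedVerts G F) \ Qs).toFinset := by
        constructor
        · intro v hv
          rw [Finset.mem_coe, Set.mem_toFinset] at hv
          exact hv.1
        · intro u hu v hv hadj
          rw [Set.mem_toFinset] at hu hv
          rcases hcover u v hadj with h | h
          · exact hu.2 h
          · exact hv.2 h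
      have h := le_gamma this
      rwa [← Set.ncard_eq_toFinset_card'] at h
  -- conclude
  have hAI : closedVerts G (S ∩ T) = closedVerts G S ∩ closedVerts G T := by
    ext v
    constructor
    · intro h; exact ⟨fun e he hv => (h e he hv).1, fun e he hv => (h e he hv).2⟩
    · rintro ⟨h1, h2⟩ e he hv; exact ⟨h1 e he hv, h2 e he hv⟩
  have hU : closedVerts G S ∪ closedVerts G T ⊆ closedVerts G (S ∪ T) := by
    rintro v (h | h) e he hv
    · exact Or.inl (h e he hv)
    · exact Or.inr (h e he hv)
  rw [key S, key T, key (S ∩ T), key (S ∪ T)]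
  have e1 : (closedVerts G S \ Qs) ∩ (closedVerts G T \ Qs) = closedVerts G (S ∩ T) \ Qs := by
    rw [hAI]; ext v; simp only [Set.mem_inter_iff, Set.mem_diff]; tauto
  have e2 : (closedVerts G S \ Qs) ∪ (closedVerts G T \ Qs)
      = (closedVerts G S ∪ closedVerts G T) \ Qs := (Set.union_diff_distrib).symm
  have h3 := Set.ncard_union_add_ncard_inter (closedVerts G S \ Qs) (closedVerts G T \ Qs)
    (Set.toFinite _) (Set.toFinite _)
  rw [e1, e2] at h3
  have h4 : ((closedVerts G S ∪ closedVerts G T) \ Qs).ncard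
      ≤ (closedVerts G (S ∪ T) \ Qs).ncard :=
    Set.ncard_le_ncard (Set.diff_subset_diff_left hU) (Set.toFinite _)
  omega

lemma two_le_degree [DecidableRel G.Adj] {u x y : V} (hx : G.Adj u x) (hy : G.Adj u y)
    (hne : x ≠ y) : 2 ≤ G.degree u :=
  Finset.one_lt_card.mpr ⟨x, by simpa [SimpleGraph.mem_neighborFinset] using hx,
    y, by simpa [SimpleGraph.mem_neighborFinset] using hy, hne⟩

-- the key contradiction: a "bad pair" with subsingleton twin set violates convexity
lemma main_contra [DecidableRel G.Adj] (hiso : ∀ v : V, ∃ u, G.Adj v u)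
    (hconv : ∀ S T : Set (Sym2 V), S ⊆ G.edgeSet → T ⊆ G.edgeSet →
        gamma G S + gamma G T ≤ gamma G (S ∩ T) + gamma G (S ∪ T))
    {a b : V} (hab : G.Adj a b)
    (hNa : ∀ z, G.Adj a z → 2 ≤ G.degree z) (hNb : ∀ z, G.Adj b z → 2 ≤ G.degree z)
    (ha2 : 2 ≤ G.degree a) (hb2 : 2 ≤ G.degree b)
    (htw : ∀ w w' : V, (G.Adj a w ∧ G.Adj b w ∧ ∀ z, G.Adj w z → z = a ∨ z = b) →
        (G.Adj a w' ∧ G.Adj b w' ∧ ∀ z, G.Adj w' z → z = a ∨ z = b) → w = w') : False := by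
  classical
  set S : Set (Sym2 V) := {f | f ∈ G.edgeSet ∧ a ∈ f} with hSdef
  set T : Set (Sym2 V) := {f | f ∈ G.edgeSet ∧ b ∈ f} with hTdef
  have hS : S ⊆ G.edgeSet := fun f hf => hf.1
  have hT : T ⊆ G.edgeSet := fun f hf => hf.1
  have hconv' := hconv S T hS hT
  -- gamma S ≥ 1
  have h1 : 1 ≤ gamma G S := by
    have : IsIndepOn G (closedVerts G S) {a} := by
      refine ⟨?_, ?_⟩
      · intro v hv
        simp only [Finset.coe_singleton, Set.mem_singleton_iff] at hv
        subst hv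
        exact fun e he hv => ⟨he, hv⟩
      · intro u hu v hv
        simp only [Finset.mem_singleton] at hu hv
        subst hu; subst hv
        exact G.irrefl
    simpa using le_gamma this
  have h2 : 1 ≤ gamma G T := by
    have : IsIndepOn G (closedVerts G T) {b} := by
      refine ⟨?_, ?_⟩
      · intro v hv
        simp only [Finset.coe_singleton, Set.mem_singleton_iff] at hv
        subst hv
        exact fun e he hv => ⟨he, hv⟩
      · intro u hu v hv
        simp only [Finset.mem_singleton] at hu hv
        subst hu; subst hv
        exact G.irrefl
    simpa using le_gamma this
  -- closedVerts (S ∩ T) is empty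
  have hempty : closedVerts G (S ∩ T) = ∅ := by
    ext v
    simp only [Set.mem_empty_iff_false, iff_false]
    intro hv
    obtain ⟨z, hz⟩ := hiso v
    have hedge : s(v, z) ∈ S ∩ T := hv _ hz (Sym2.mem_mk_left _ _)
    have hav : a ∈ s(v, z) := hedge.1.2
    have hbv : b ∈ s(v, z) := hedge.2.2
    have heq : s(v, z) = s(a, b) := (Sym2.mem_and_mem_iff hab.ne).mp ⟨hav, hbv⟩
    have hvab : v = a ∨ v = b := by
      have : v ∈ s(a, b) := heq ▸ Sym2.mem_mk_left v z
      exact Sym2.mem_iff.mp this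
    rcases hvab with rfl | rfl
    · obtain ⟨z', hz', hz'b⟩ := Finset.exists_mem_ne ha2 b
      rw [SimpleGraph.mem_neighborFinset] at hz'
      have hedge' : s(v, z') ∈ S ∩ T := hv _ hz' (Sym2.mem_mk_left _ _)
      have : b ∈ s(v, z') := hedge'.2.2
      rcases Sym2.mem_iff.mp this with h | h
      · exact hab.ne h.symm
      · exact hz'b h.symm
    · obtain ⟨z', hz', hz'a⟩ := Finset.exists_mem_ne hb2 a
      rw [SimpleGraph.mem_neighborFinset] at hz'
      have hedge' : s(v, z') ∈ S ∩ T := hv _ hz' (Sym2.mem_mk_left _ _)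
      have : a ∈ s(v, z') := hedge'.1.2
      rcases Sym2.mem_iff.mp this with h | h
      · exact hab.ne h
      · exact hz'a h.symm
  have h3 : gamma G (S ∩ T) ≤ 0 := by
    apply gamma_le
    intro s hs
    have : (s : Set V) = ∅ := Set.subset_empty_iff.mp (hempty ▸ hs.1)
    simp [Finset.coe_eq_empty.mp this]
  -- closedVerts (S ∪ T) is a clique
  have hC : ∀ v ∈ closedVerts G (S ∪ T), v = a ∨ v = b ∨
      (G.Adj a v ∧ G.Adj b v ∧ ∀ z, G.Adj v z → z = a ∨ z = b) := by
    intro v hv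
    by_cases hva : v = a
    · exact Or.inl hva
    by_cases hvb : v = b
    · exact Or.inr (Or.inl hvb)
    have hnbr : ∀ z, G.Adj v z → z = a ∨ z = b := by
      intro z hz
      have hedge : s(v, z) ∈ S ∪ T := hv _ hz (Sym2.mem_mk_left _ _)
      rcases hedge with h | h
      · rcases Sym2.mem_iff.mp h.2 with h' | h'
        · exact absurd h'.symm hva
        · exact Or.inl h'.symm
      · rcases Sym2.mem_iff.mp h.2 with h' | h'
        · exact absurd h'.symm hvb
        · exact Or.inr h'.symm
    -- v is adjacent to both a and b
    have hadja : G.Adj v a ∧ G.Adj v b := by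
      obtain ⟨z0, hz0⟩ := hiso v
      constructor
      · by_contra hA
        have hall : ∀ z, G.Adj v z → z = b := by
          intro z hz
          rcases hnbr z hz with rfl | rfl
          · exact absurd hz hA
          · rfl
        have hNv : G.neighborFinset v = {b} := by
          apply Finset.eq_singleton_iff_unique_mem.mpr
          refine ⟨?_, ?_⟩
          · rw [SimpleGraph.mem_neighborFinset]
            have := hall z0 hz0
            subst this
            exact hz0
          · intro x hx
            rw [SimpleGraph.mem_neighborFinset] at hx
            exact hall x hx
        have hdeg : G.degree v = 1 := by
          rw [SimpleGraph.degree, hNv, Finset.card_singleton]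
        have := hNb v (by
          have := hall z0 hz0
          subst this
          exact hz0.symm)
        omega
      · by_contra hB
        have hall : ∀ z, G.Adj v z → z = a := by
          intro z hz
          rcases hnbr z hz with rfl | rfl
          · rfl
          · exact absurd hz hB
        have hNv : G.neighborFinset v = {a} := by
          apply Finset.eq_singleton_iff_unique_mem.mpr
          refine ⟨?_, ?_⟩
          · rw [SimpleGraph.mem_neighborFinset]
            have := hall z0 hz0
            subst this
            exact hz0
          · intro x hx
            rw [SimpleGraph.mem_neighborFinset] at hx
            exact hall x hx
        have hdeg : G.degree v = 1 := by
          rw [SimpleGraph.degree, hNv, Finset.card_singleton]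
        have := hNa v (by
          have := hall z0 hz0
          subst this
          exact hz0.symm)
        omega
    exact Or.inr (Or.inr ⟨hadja.1.symm, hadja.2.symm, hnbr⟩)
  have hclique : ∀ u ∈ closedVerts G (S ∪ T), ∀ v ∈ closedVerts G (S ∪ T),
      u ≠ v → G.Adj u v := by
    intro u hu v hv huv
    rcases hC u hu with rfl | rfl | hu' <;> rcases hC v hv with rfl | rfl | hv'
    · exact absurd rfl huv
    · exact hab
    · exact hv'.1
    · exact hab.symm
    · exact absurd rfl huv
    · exact hv'.2.1
    · exact hu'.1.symm
    · exact hu'.2.1.symm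
    · exact absurd (htw u v hu' hv') huv
  have h4 : gamma G (S ∪ T) ≤ 1 := by
    apply gamma_le
    intro s hs
    apply Finset.card_le_one.mpr
    intro u hu v hv
    by_contra hne
    exact hs.2 u hu v hv (hclique u (hs.1 hu) v (hs.1 hv) hne)
  omega

lemma nec [DecidableRel G.Adj] (hiso : ∀ v : V, ∃ u, G.Adj v u)
    (hconv : ∀ S T : Set (Sym2 V), S ⊆ G.edgeSet → T ⊆ G.edgeSet →
        gamma G S + gamma G T ≤ gamma G (S ∩ T) + gamma G (S ∪ T)) :
    ∀ e ∈ G.edgeSet, (¬ ∃ v ∈ e, G.degree v = 1) →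
      ∃ f ∈ G.edgeSet, (∃ v ∈ f, G.degree v = 1) ∧ ∃ u : V, u ∈ e ∧ u ∈ f := by
  intro e he hnp
  by_contra hno
  push_neg at hno
  revert he hnp hno
  induction e using Sym2.inductionOn with
  | hf x y =>
    intro he hnp hno
    have hadj : G.Adj x y := he
    have hx2 : 2 ≤ G.degree x := by
      have h1 := (G.degree_pos_iff_exists_adj x).mpr ⟨y, hadj⟩
      have h2 : G.degree x ≠ 1 := fun h => hnp ⟨x, Sym2.mem_mk_left _ _, h⟩
      omega
    have hy2 : 2 ≤ G.degree y := by
      have h1 := (G.degree_pos_iff_exists_adj y).mpr ⟨x, hadj.symm⟩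
      have h2 : G.degree y ≠ 1 := fun h => hnp ⟨y, Sym2.mem_mk_right _ _, h⟩
      omega
    have hpend : ∀ w z : V, (w = x ∨ w = y) → G.Adj w z → 2 ≤ G.degree z := by
      intro w z hw hz
      have h1 := (G.degree_pos_iff_exists_adj z).mpr ⟨w, hz.symm⟩
      have h2 : G.degree z ≠ 1 := by
        intro hdz
        have hwmem : w ∈ s(x, y) := by
          rcases hw with rfl | rfl
          · exact Sym2.mem_mk_left _ _
          · exact Sym2.mem_mk_right _ _
        exact hno (s(w, z)) hz ⟨z, Sym2.mem_mk_right _ _, hdz⟩ w hwmem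
          (Sym2.mem_mk_left _ _)
      omega
    by_cases htw : ∀ w w' : V,
        (G.Adj x w ∧ G.Adj y w ∧ ∀ z, G.Adj w z → z = x ∨ z = y) →
        (G.Adj x w' ∧ G.Adj y w' ∧ ∀ z, G.Adj w' z → z = x ∨ z = y) → w = w'
    · exact main_contra hiso hconv hadj (fun z hz => hpend x z (Or.inl rfl) hz)
        (fun z hz => hpend y z (Or.inr rfl) hz) hx2 hy2 htw
    · push_neg at htw
      obtain ⟨w, w', hw, hw', hne⟩ := htw
      have hu2 : 2 ≤ G.degree w := two_le_degree hw.1.symm hw.2.1.symm hadj.ne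
      refine main_contra hiso hconv hw.1 (fun z hz => hpend x z (Or.inl rfl) hz) ?_ hx2 hu2 ?_
      · intro z hz
        rcases hw.2.2 z hz with rfl | rfl
        · exact hx2
        · exact hy2
      · intro t t' ht ht'
        exfalso
        have hty : t = y := by
          rcases hw.2.2 t ht.2.1 with rfl | rfl
          · exact absurd ht.1 G.irrefl
          · rfl
        subst hty
        rcases ht.2.2 w' hw'.2.1 with rfl | rfl
        · exact absurd hw'.1 G.irrefl
        · exact hne rfl
end aux

theorem stmt4 {V : Type*} [Fintype V] (G : SimpleGraph V) [DecidableRel G.Adj]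
    (hiso : ∀ v : V, ∃ u, G.Adj v u) :
    (∀ S T : Set (Sym2 V), S ⊆ G.edgeSet → T ⊆ G.edgeSet →
        gamma G S + gamma G T ≤ gamma G (S ∩ T) + gamma G (S ∪ T)) ↔
      (∀ e ∈ G.edgeSet, (¬ ∃ v ∈ e, G.degree v = 1) →
        ∃ f ∈ G.edgeSet, (∃ v ∈ f, G.degree v = 1) ∧ ∃ u : V, u ∈ e ∧ u ∈ f) := by
  constructor
  · intro hconv
    exact nec hiso hconv
  · intro hcond S T _ _
    exact suff hcond S T
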